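/- For the relative fitnesses r_1, …, r_{N−1} of the Moran process, exactly one of the following holds: r_i < r_{i+1} for all 1 ≤ i ≤ N−2, or r_i > r_{i+1} for all 1 ≤ i ≤ N−2, or r_i = r_{i+1} for all 1 ≤ i ≤ N−2; that is, the sequence (r_i) is either strictly increasing, strictly decreasing, or constant. -/

import Mathlib

/-- For the relative fitnesses r_1, …, r_{N−1} of the Moran process,
exactly one of the following holds: the sequence (r_i) is strictly increasing,
strictly decreasing, or constant on {1, …, N−1}. -/
theorem moran_relative_fitness_monotone_or_constant
    (N : ℕ) (hN : 3 ≤ N) (a b c d w : ℝ)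
    (ha : 0 < a) (hb : 0 < b) (hc : 0 < c) (hd : 0 < d)
    (hw0 : 0 ≤ w) (hw1 : w ≤ 1)
    (r : ℕ → ℝ)
    (hr : ∀ i, 1 ≤ i → i ≤ N - 1 →
      r i = (1 - w + w * (a * ((i : ℝ) - 1) / ((N : ℝ) - 1) +
                b * ((N : ℝ) - (i : ℝ)) / ((N : ℝ) - 1))) /
            (1 - w + w * (c * (i : ℝ) / ((N : ℝ) - 1) +
                d * ((N : ℝ) - (i : ℝ) - 1) / ((N : ℝ) - 1))))
    (hrpos : ∀ i, 1 ≤ i → i ≤ N - 1 → 0 < r i) :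
    ((∀ i, 1 ≤ i → i ≤ N - 2 → r i < r (i + 1)) ∧
      ¬(∀ i, 1 ≤ i → i ≤ N - 2 → r (i + 1) < r i) ∧
      ¬(∀ i, 1 ≤ i → i ≤ N - 2 → r i = r (i + 1))) ∨
    (¬(∀ i, 1 ≤ i → i ≤ N - 2 → r i < r (i + 1)) ∧
      (∀ i, 1 ≤ i → i ≤ N - 2 → r (i + 1) < r i) ∧
      ¬(∀ i, 1 ≤ i → i ≤ N - 2 → r i = r (i + 1))) ∨
    (¬(∀ i, 1 ≤ i → i ≤ N - 2 → r i < r (i + 1)) ∧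
      ¬(∀ i, 1 ≤ i → i ≤ N - 2 → r (i + 1) < r i) ∧
      (∀ i, 1 ≤ i → i ≤ N - 2 → r i = r (i + 1))) := by
  have hN3 : (3:ℝ) ≤ (N:ℝ) := by exact_mod_cast hN
  set n : ℝ := (N:ℝ) - 1 with hn
  have hnpos : 0 < n := by rw [hn]; linarith
  have hnne : n ≠ 0 := ne_of_gt hnpos
  set F : ℝ → ℝ := fun x => 1 - w + w * (a * (x - 1) / n + b * ((N:ℝ) - x) / n) with hF
  set G : ℝ → ℝ := fun x => 1 - w + w * (c * x / n + d * ((N:ℝ) - x - 1) / n) with hG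
  set K : ℝ := (w*(a-b)/n)*(1-w+w*d) - (1-w+w*(b*(N:ℝ)-a)/n)*(w*(c-d)/n) with hK
  have hkey : ∀ x : ℝ, F (x+1) * G x - F x * G (x+1) = K := by
    intro x
    simp only [hF, hG, hK]
    field_simp
    ring
  have hGpos : ∀ x : ℝ, 1 ≤ x → x ≤ (N:ℝ) - 1 → 0 < G x := by
    intro x h1 h2
    simp only [hG]
    rcases eq_or_lt_of_le hw0 with h | h
    · rw [← h]; norm_num
    · have t1 : 0 < c * x / n := div_pos (mul_pos hc (by linarith)) hnpos
      have t2 : 0 ≤ d * ((N:ℝ) - x - 1) / n :=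
        div_nonneg (mul_nonneg hd.le (by linarith)) hnpos.le
      have : 0 < w * (c * x / n + d * ((N:ℝ) - x - 1) / n) :=
        mul_pos h (by linarith)
      linarith
  have hdiff : ∀ i : ℕ, 1 ≤ i → i ≤ N - 2 →
      ∃ p : ℝ, 0 < p ∧ r (i+1) - r i = K / p := by
    intro i h1 h2
    have h2' : i + 2 ≤ N := by omega
    have hi1 : (1:ℝ) ≤ (i:ℝ) := by exact_mod_cast h1
    have hiN : (i:ℝ) + 2 ≤ (N:ℝ) := by exact_mod_cast h2'
    have e1 : r i = F (i:ℝ) / G (i:ℝ) := by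
      rw [hr i h1 (by omega)]
    have e2 : r (i+1) = F ((i:ℝ)+1) / G ((i:ℝ)+1) := by
      rw [hr (i+1) (by omega) (by omega)]
      simp only [hF, hG]
      push_cast
      ring_nf
    have g1 : 0 < G (i:ℝ) := hGpos _ hi1 (by linarith)
    have g2 : 0 < G ((i:ℝ)+1) := hGpos _ (by linarith) (by linarith)
    refine ⟨G ((i:ℝ)+1) * G (i:ℝ), mul_pos g2 g1, ?_⟩
    rw [e1, e2, div_sub_div _ _ (ne_of_gt g2) (ne_of_gt g1)]
    rw [show F ((i:ℝ)+1) * G (i:ℝ) - G ((i:ℝ)+1) * F (i:ℝ) = K by rw [← hkey (i:ℝ)]; ring]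
  have h1N : 1 ≤ N - 2 := by omega
  rcases lt_trichotomy K 0 with hk | hk | hk
  · right; left
    obtain ⟨p, hp, he⟩ := hdiff 1 le_rfl h1N
    have hneg : K / p < 0 := div_neg_of_neg_of_pos hk hp
    refine ⟨?_, ?_, ?_⟩
    · intro hall
      have := hall 1 le_rfl h1N
      linarith
    · intro i hi1 hi2
      obtain ⟨q, hq, heq⟩ := hdiff i hi1 hi2
      have : K / q < 0 := div_neg_of_neg_of_pos hk hq
      linarith
    · intro hall
      have := hall 1 le_rfl h1N
      linarith
  · right; right
    obtain ⟨p, hp, he⟩ := hdiff 1 le_rfl h1N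
    rw [hk] at he
    simp at he
    refine ⟨?_, ?_, ?_⟩
    · intro hall
      have := hall 1 le_rfl h1N
      linarith
    · intro hall
      have := hall 1 le_rfl h1N
      linarith
    · intro i hi1 hi2
      obtain ⟨q, hq, heq⟩ := hdiff i hi1 hi2
      rw [hk] at heq
      simp at heq
      linarith
  · left
    obtain ⟨p, hp, he⟩ := hdiff 1 le_rfl h1N
    have hpos : 0 < K / p := div_pos hk hp
    refine ⟨?_, ?_, ?_⟩
    · intro i hi1 hi2
      obtain ⟨q, hq, heq⟩ := hdiff i hi1 hi2
      have : 0 < K / q := div_pos hk hq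
      linarith
    · intro hall
      have := hall 1 le_rfl h1N
      linarith
    · intro hall
      have := hall 1 le_rfl h1N
      linarith
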